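/- Let N ≥ 1, let M₁,...,M_N > 0, let U : (ℝ^d)^N → ℝ be twice continuously differentiable, and let (q_i(t), p_i(t)) and (q̄_i(t), p̄_i(t)) be two C¹ solutions of Hamilton's equations q̇_i = p_i/M_i, ṗ_i = -∂_{q_i}U(q), with Hamiltonian H(q,p) = Σᵢ |p_i|²/(2M_i) + U(q). Define the relative Hamiltonian H_rel(t) = Σᵢ |p_i - p̄_i|²/(2M_i) + U(q) - U(q̄) - Σ_k ∂_{q_k}U(q̄)·(q_k - q̄_k). Then d/dt H_rel(t) = -Σ_k q̄̇_k · ( -∂_{q_k}U(q) + ∂_{q_k}U(q̄) + Σ_ℓ ∂_{q_ℓ}∂_{q_k}U(q̄)(q_ℓ - q̄_ℓ) ). -/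

import Mathlib

open MeasureTheory
open scoped RealInnerProductSpace BigOperators
open InnerProductSpace

theorem grad_fderiv_eq' {d N : ℕ} {U : EuclideanSpace ℝ (Fin N × Fin d) → ℝ}
    (hU : ContDiff ℝ 2 U) (x u w : EuclideanSpace ℝ (Fin N × Fin d)) :
    ⟪fderiv ℝ (gradient U) x u, w⟫ = fderiv ℝ (fderiv ℝ U) x u w := by
  have hUd : Differentiable ℝ U := hU.differentiable (by norm_num)
  have hf' : Differentiable ℝ (fderiv ℝ U) :=
    (hU.fderiv_right (m := 1) (by norm_num)).differentiable (by norm_num)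
  have hf'' : HasFDerivAt (fderiv ℝ U) (fderiv ℝ (fderiv ℝ U) x) x :=
    (hf' x).hasFDerivAt
  have hgd : Differentiable ℝ (gradient U) :=
    ((toDual ℝ _).symm.differentiable).comp hf'
  have hG : HasFDerivAt (gradient U) (fderiv ℝ (gradient U) x) x :=
    (hgd x).hasFDerivAt
  have h1 : HasFDerivAt (fun y => ⟪w, gradient U y⟫)
      ((innerSL ℝ w).comp (fderiv ℝ (gradient U) x)) x :=
    ((innerSL ℝ w).hasFDerivAt).comp x hG
  have h2 : HasFDerivAt (fun y => fderiv ℝ U y w)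
      ((ContinuousLinearMap.apply ℝ ℝ w).comp (fderiv ℝ (fderiv ℝ U) x)) x :=
    ((ContinuousLinearMap.apply ℝ ℝ w).hasFDerivAt).comp x hf''
  have heq : (fun y => ⟪w, gradient U y⟫) = (fun y => fderiv ℝ U y w) := by
    funext y
    rw [real_inner_comm, ← toDual_apply_apply (𝕜 := ℝ), ← ((hUd y).hasGradientAt).hasFDerivAt.fderiv]
  rw [heq] at h1
  have happ := DFunLike.congr_fun (h1.unique h2) u
  simpa [real_inner_comm, mul_comm] using happ

theorem grad_fderiv_symm' {d N : ℕ} {U : EuclideanSpace ℝ (Fin N × Fin d) → ℝ}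
    (hU : ContDiff ℝ 2 U) (x u w : EuclideanSpace ℝ (Fin N × Fin d)) :
    ⟪fderiv ℝ (gradient U) x u, w⟫ = ⟪fderiv ℝ (gradient U) x w, u⟫ := by
  have hUd : Differentiable ℝ U := hU.differentiable (by norm_num)
  have hf'' : HasFDerivAt (fderiv ℝ U) (fderiv ℝ (fderiv ℝ U) x) x :=
    (((hU.fderiv_right (m := 1) (by norm_num)).differentiable (by norm_num)) x).hasFDerivAt
  rw [grad_fderiv_eq' hU, grad_fderiv_eq' hU]
  exact second_derivative_symmetric (fun y => (hUd y).hasFDerivAt) hf'' u w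


/-- Relative Hamiltonian identity for classical `N`-particle mechanics: for two `C¹` solutions
of Hamilton's equations with Hamiltonian `H(q,p) = Σᵢ |pᵢ|²/(2Mᵢ) + U(q)`, the time derivative
of the relative Hamiltonian is minus the sum of relative work rates. -/
theorem stmt_9 (d N : ℕ) (hN : 1 ≤ N) (M : Fin N → ℝ) (hM : ∀ i, 0 < M i)
    (U : EuclideanSpace ℝ (Fin N × Fin d) → ℝ) (hU : ContDiff ℝ 2 U)
    (Q P Qb Pb : ℝ → EuclideanSpace ℝ (Fin N × Fin d))
    (hQ : ∀ t, HasDerivAt Q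
      ((WithLp.toLp 2 (fun ij => (M ij.1)⁻¹ * P t ij) : EuclideanSpace ℝ (Fin N × Fin d))) t)
    (hP : ∀ t, HasDerivAt P (-(gradient U (Q t))) t)
    (hQb : ∀ t, HasDerivAt Qb
      ((WithLp.toLp 2 (fun ij => (M ij.1)⁻¹ * Pb t ij) : EuclideanSpace ℝ (Fin N × Fin d))) t)
    (hPb : ∀ t, HasDerivAt Pb (-(gradient U (Qb t))) t) :
    ∀ t : ℝ,
      HasDerivAt
        (fun s => (∑ ij : Fin N × Fin d, (2 * M ij.1)⁻¹ * (P s ij - Pb s ij) ^ 2)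
          + U (Q s) - U (Qb s) - ⟪gradient U (Qb s), Q s - Qb s⟫)
        (-⟪(show EuclideanSpace ℝ (Fin N × Fin d) from WithLp.toLp 2 (fun ij => (M ij.1)⁻¹ * Pb t ij)),
            -gradient U (Q t) + gradient U (Qb t)
              + (fderiv ℝ (gradient U) (Qb t)) (Q t - Qb t)⟫)
        t := by
  intro t
  have hUd : Differentiable ℝ U := hU.differentiable (by norm_num)
  have hgd : Differentiable ℝ (gradient U) :=
    ((toDual ℝ _).symm.differentiable).comp
      ((hU.fderiv_right (m := 1) (by norm_num)).differentiable (by norm_num))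
  set qd : EuclideanSpace ℝ (Fin N × Fin d) := WithLp.toLp 2 (fun ij => (M ij.1)⁻¹ * P t ij) with hqd
  set qbd : EuclideanSpace ℝ (Fin N × Fin d) := WithLp.toLp 2 (fun ij => (M ij.1)⁻¹ * Pb t ij) with hqbd
  have hUQ : HasDerivAt (fun s => U (Q s)) ⟪gradient U (Q t), qd⟫ t := by
    have h := (((hUd (Q t)).hasGradientAt).hasFDerivAt).comp_hasDerivAt t (hQ t)
    simpa [toDual_apply_apply, Function.comp_def] using h
  have hUQb : HasDerivAt (fun s => U (Qb s)) ⟪gradient U (Qb t), qbd⟫ t := by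
    have h := (((hUd (Qb t)).hasGradientAt).hasFDerivAt).comp_hasDerivAt t (hQb t)
    simpa [toDual_apply_apply, Function.comp_def] using h
  have hGb : HasDerivAt (fun s => gradient U (Qb s))
      (fderiv ℝ (gradient U) (Qb t) qbd) t :=
    ((hgd (Qb t)).hasFDerivAt).comp_hasDerivAt t (hQb t)
  have hQQb : HasDerivAt (fun s => Q s - Qb s) (qd - qbd) t := (hQ t).sub (hQb t)
  have hIP : HasDerivAt (fun s => ⟪gradient U (Qb s), Q s - Qb s⟫)
      (⟪gradient U (Qb t), qd - qbd⟫ + ⟪fderiv ℝ (gradient U) (Qb t) qbd, Q t - Qb t⟫) t :=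
    hGb.inner ℝ hQQb
  have hK : HasDerivAt
      (fun s => ∑ ij : Fin N × Fin d, (2 * M ij.1)⁻¹ * (P s ij - Pb s ij) ^ 2)
      (∑ ij : Fin N × Fin d, (2 * M ij.1)⁻¹ *
        ((2 : ℕ) * (P t ij - Pb t ij) ^ 1 *
          ((-(gradient U (Q t))) ij - (-(gradient U (Qb t))) ij))) t := by
    apply HasDerivAt.fun_sum
    intro ij _
    have hPij : HasDerivAt (fun s => P s ij) ((-(gradient U (Q t))) ij) t := by
      have := (EuclideanSpace.proj (𝕜 := ℝ) ij).hasFDerivAt.comp_hasDerivAt t (hP t)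
      simp only [Function.comp_def] at this
      exact this
    have hPbij : HasDerivAt (fun s => Pb s ij) ((-(gradient U (Qb t))) ij) t := by
      have := (EuclideanSpace.proj (𝕜 := ℝ) ij).hasFDerivAt.comp_hasDerivAt t (hPb t)
      simp only [Function.comp_def] at this
      exact this
    exact ((hPij.sub hPbij).pow 2).const_mul _
  have htot := ((hK.add hUQ).sub hUQb).sub hIP
  convert htot using 1
  · rfl
  · rfl
  · rfl
  have hKval : (∑ ij : Fin N × Fin d, (2 * M ij.1)⁻¹ *
        ((2 : ℕ) * (P t ij - Pb t ij) ^ 1 *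
          ((-(gradient U (Q t))) ij - (-(gradient U (Qb t))) ij)))
      = ⟪qd - qbd, -gradient U (Q t) + gradient U (Qb t)⟫ := by
    rw [PiLp.inner_apply]
    refine Finset.sum_congr rfl fun ij _ => ?_
    have hm : (M ij.1) ≠ 0 := (hM ij.1).ne'
    simp only [RCLike.inner_apply, conj_trivial, PiLp.sub_apply, PiLp.add_apply,
      PiLp.neg_apply, hqd, hqbd, PiLp.toLp_apply, pow_one, Nat.cast_ofNat]
    field_simp
    ring
  have hsym : ⟪fderiv ℝ (gradient U) (Qb t) qbd, Q t - Qb t⟫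
      = ⟪qbd, fderiv ℝ (gradient U) (Qb t) (Q t - Qb t)⟫ := by
    rw [grad_fderiv_symm' hU, real_inner_comm]
  rw [hKval, hsym]
  simp only [inner_add_right, inner_sub_right, inner_neg_right, inner_add_left,
    inner_sub_left, inner_neg_left, real_inner_comm (qd - qbd)]
  ring_nf
  rw [real_inner_comm (gradient U (Q t)) qd, real_inner_comm (gradient U (Qb t)) qbd]
  ring
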